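/- Let p, q be nonzero complex numbers, let A be a (not necessarily commutative) ℂ-algebra, and let θ, φ, a, b, c, d ∈ A be such that: θ² = 0, φ² = 0, θφ + p⁻¹φθ = 0; each of a, b, c, d commutes with θ and with φ; and a, b, c, d satisfy the GL_{p,q}(2) relations ab = p·ba, cd = p·dc, ac = q·ca, bd = q·db, p·bc = q·cb, and ad - da = (p - q⁻¹)·bc. Then the transformed coordinates θ' = aθ + bφ and φ' = cθ + dφ satisfy the same quantum exterior plane relations: θ'² = 0, φ'² = 0, and θ'φ' + p⁻¹φ'θ' = 0. -/
import Mathlib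


/-- The quantum exterior plane relations `θ² = 0`, `φ² = 0`, `θφ + p⁻¹φθ = 0` are
preserved under the transformation `θ' = aθ + bφ`, `φ' = cθ + dφ` by a quantum matrix
with entries satisfying the `GL_{p,q}(2)` relations and commuting with the coordinates. -/
theorem exterior_plane_covariance (p q : ℂ) (hp : p ≠ 0) (hq : q ≠ 0)
    {A : Type*} [Ring A] [Algebra ℂ A] (θ φ a b c d : A)
    (hθ2 : θ ^ 2 = 0) (hφ2 : φ ^ 2 = 0) (hθφ : θ * φ + p⁻¹ • (φ * θ) = 0)
    (hcomm : ∀ t ∈ ({a, b, c, d} : Set A), ∀ x ∈ ({θ, φ} : Set A), t * x = x * t)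
    (hab : a * b = p • (b * a)) (hcd : c * d = p • (d * c))
    (hac : a * c = q • (c * a)) (hbd : b * d = q • (d * b))
    (hbc : p • (b * c) = q • (c * b))
    (had : a * d - d * a = (p - q⁻¹) • (b * c)) :
    (a * θ + b * φ) ^ 2 = 0 ∧ (c * θ + d * φ) ^ 2 = 0 ∧
      (a * θ + b * φ) * (c * θ + d * φ) +
        p⁻¹ • ((c * θ + d * φ) * (a * θ + b * φ)) = 0 := by
  have haθ : θ * a = a * θ := (hcomm a (by simp) θ (by simp)).symm
  have haφ : φ * a = a * φ := (hcomm a (by simp) φ (by simp)).symm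
  have hbθ : θ * b = b * θ := (hcomm b (by simp) θ (by simp)).symm
  have hbφ : φ * b = b * φ := (hcomm b (by simp) φ (by simp)).symm
  have hcθ : θ * c = c * θ := (hcomm c (by simp) θ (by simp)).symm
  have hcφ : φ * c = c * φ := (hcomm c (by simp) φ (by simp)).symm
  have hdθ : θ * d = d * θ := (hcomm d (by simp) θ (by simp)).symm
  have hdφ : φ * d = d * φ := (hcomm d (by simp) φ (by simp)).symm
  have haθ' : ∀ x : A, θ * (a * x) = a * (θ * x) := fun x => by
    rw [← mul_assoc, haθ, mul_assoc]
  have haφ' : ∀ x : A, φ * (a * x) = a * (φ * x) := fun x => by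
    rw [← mul_assoc, haφ, mul_assoc]
  have hbθ' : ∀ x : A, θ * (b * x) = b * (θ * x) := fun x => by
    rw [← mul_assoc, hbθ, mul_assoc]
  have hbφ' : ∀ x : A, φ * (b * x) = b * (φ * x) := fun x => by
    rw [← mul_assoc, hbφ, mul_assoc]
  have hcθ' : ∀ x : A, θ * (c * x) = c * (θ * x) := fun x => by
    rw [← mul_assoc, hcθ, mul_assoc]
  have hcφ' : ∀ x : A, φ * (c * x) = c * (φ * x) := fun x => by
    rw [← mul_assoc, hcφ, mul_assoc]
  have hdθ' : ∀ x : A, θ * (d * x) = d * (θ * x) := fun x => by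
    rw [← mul_assoc, hdθ, mul_assoc]
  have hdφ' : ∀ x : A, φ * (d * x) = d * (φ * x) := fun x => by
    rw [← mul_assoc, hdφ, mul_assoc]
  have hθθ : θ * θ = 0 := by rw [← sq]; exact hθ2
  have hφφ : φ * φ = 0 := by rw [← sq]; exact hφ2
  have hφθ : φ * θ = (-p) • (θ * φ) := by
    have := congrArg (fun x => p • x) hθφ
    simp only [smul_add, smul_smul, mul_inv_cancel₀ hp, one_smul, smul_zero] at this
    rw [eq_neg_of_add_eq_zero_right this, neg_smul]
  refine ⟨?_, ?_, ?_⟩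
  · have : (a * θ + b * φ) ^ 2 = (a * b - p • (b * a)) * (θ * φ) := by
      simp only [sq, mul_add, add_mul, mul_assoc, haθ', haφ', hbθ', hbφ',
        hθθ, hφφ, hφθ, mul_zero, mul_smul_comm, smul_smul, sub_mul, smul_mul_assoc]
      module
    rw [this, hab, sub_self, zero_mul]
  · have : (c * θ + d * φ) ^ 2 = (c * d - p • (d * c)) * (θ * φ) := by
      simp only [sq, mul_add, add_mul, mul_assoc, hcθ', hcφ', hdθ', hdφ',
        hθθ, hφφ, hφθ, mul_zero, mul_smul_comm, smul_smul, sub_mul, smul_mul_assoc]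
      module
    rw [this, hcd, sub_self, zero_mul]
  · have key : (a * θ + b * φ) * (c * θ + d * φ) +
        p⁻¹ • ((c * θ + d * φ) * (a * θ + b * φ)) =
        ((a * d - d * a) - p • (b * c) + p⁻¹ • (c * b)) * (θ * φ) := by
      simp only [mul_add, add_mul, mul_assoc, haθ', haφ', hbθ', hbφ', hcθ', hcφ',
        hdθ', hdφ', hθθ, hφφ, hφθ, mul_zero, mul_smul_comm, smul_smul, sub_mul,
        smul_mul_assoc, add_mul, smul_add, add_mul, sub_mul]
      have hpp : p⁻¹ * -p = -1 := by field_simp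
      rw [hpp]
      simp only [neg_one_smul, smul_zero, add_zero, zero_add]
      module
    rw [key, had]
    have hcb : p⁻¹ • (c * b) = (q⁻¹) • (b * c) := by
      have h := congrArg (fun x => (p⁻¹ * q⁻¹) • x) hbc
      simp only [smul_smul] at h
      have e1 : p⁻¹ * q⁻¹ * p = q⁻¹ := by field_simp; try ring
      have e2 : p⁻¹ * q⁻¹ * q = p⁻¹ := by field_simp; try ring
      rw [e1, e2] at h
      exact h.symm
    rw [hcb, ← sub_smul, ← add_smul]
    ring_nf
    simp
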